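/- arXiv:1401.6442 — 7 statements merged into one kernel-verified Lean document; each statement's English description precedes it below -/
import Mathlib

section
/- For any integer m and positive integer n, the formal residue (coefficient of y^{-1}) of the formal Laurent series e^{my}/(e^y - 1)^n equals the binomial coefficient \binom{m-1}{n-1}. -/
open PowerSeries

noncomputable def B : PowerSeries ℚ := PowerSeries.mk fun n => (1 : ℚ)/(n+1).factorial

lemma X_mul_B : (PowerSeries.X : ℚ⟦X⟧) * B = exp ℚ - 1 := by
  ext k
  cases k with
  | zero => simp [B, coeff_exp]
  | succ k => simp [B, coeff_exp, PowerSeries.coeff_succ_X_mul]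

lemma isUnit_B : IsUnit B := by
  rw [PowerSeries.isUnit_iff_constantCoeff]
  simp [B, ← coeff_zero_eq_constantCoeff_apply]

lemma isUnit_exp : IsUnit (exp ℚ) := by
  rw [PowerSeries.isUnit_iff_constantCoeff, constantCoeff_exp]
  exact isUnit_one

lemma derivative_exp : d⁄dX ℚ (exp ℚ) = exp ℚ := by
  ext k
  rw [PowerSeries.coeff_derivative]
  simp [coeff_exp, Nat.factorial_succ]
  field_simp

noncomputable def UB : (PowerSeries ℚ)ˣ := isUnit_B.unit
noncomputable def UE : (PowerSeries ℚ)ˣ := isUnit_exp.unit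
noncomputable def Bi : PowerSeries ℚ := ((UB⁻¹ : (PowerSeries ℚ)ˣ) : PowerSeries ℚ)

lemma B_mul_Bi : B * Bi = 1 := by
  have := UB.mul_inv
  rwa [show (UB : PowerSeries ℚ) = B from isUnit_B.unit_spec] at this

lemma X_mul_dB : (X : ℚ⟦X⟧) * d⁄dX ℚ B = exp ℚ - B := by
  have h := congrArg (d⁄dX ℚ) X_mul_B
  rw [Derivation.leibniz, map_sub, Derivation.map_one_eq_zero, _root_.derivative_exp, derivative_X, smul_eq_mul,
    smul_eq_mul] at h
  linear_combination h

lemma X_mul_dBi : (X : ℚ⟦X⟧) * d⁄dX ℚ Bi = Bi - exp ℚ * Bi ^ 2 := by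
  have h := congrArg (d⁄dX ℚ) B_mul_Bi
  rw [Derivation.leibniz, Derivation.map_one_eq_zero, smul_eq_mul, smul_eq_mul] at h
  linear_combination (X * Bi) * h + (-Bi^2) * X_mul_dB + (Bi - X * d⁄dX ℚ Bi) * B_mul_Bi

lemma KI (k : ℕ) : (X : ℚ⟦X⟧) * d⁄dX ℚ (Bi ^ k) =
    (k : ℚ⟦X⟧) * (Bi ^ k - exp ℚ * Bi ^ (k + 1)) := by
  induction k with
  | zero => simp
  | succ k ih =>
    have h : d⁄dX ℚ (Bi ^ (k+1)) = Bi ^ k * d⁄dX ℚ Bi + Bi * d⁄dX ℚ (Bi ^ k) := by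
      rw [pow_succ, Derivation.leibniz, smul_eq_mul, smul_eq_mul]
    push_cast
    linear_combination X * h + Bi ^ k * X_mul_dBi + Bi * ih

lemma coeff_X_mul_derivative (f : ℚ⟦X⟧) (j : ℕ) :
    coeff j ((X : ℚ⟦X⟧) * d⁄dX ℚ f) = j * coeff j f := by
  cases j with
  | zero => simp [PowerSeries.coeff_zero_X_mul]
  | succ j =>
    rw [PowerSeries.coeff_succ_X_mul, PowerSeries.coeff_derivative]
    push_cast [Nat.cast_succ]
    ring

lemma coeff_exp_mul_Bi (k : ℕ) (hk : 0 < k) :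
    coeff k (exp ℚ * Bi ^ (k + 1)) = 0 := by
  have h := congrArg (coeff k) (KI k)
  rw [coeff_X_mul_derivative, show ((k : ℕ) : ℚ⟦X⟧) = C (k : ℚ) by push_cast; rfl,
    coeff_C_mul, map_sub] at h
  have hk' : (k : ℚ) ≠ 0 := Nat.cast_ne_zero.mpr hk.ne'
  have h3 : (k : ℚ) * coeff k (exp ℚ * Bi ^ (k + 1)) = 0 := by linear_combination h
  exact (mul_eq_zero.mp h3).resolve_left hk'

lemma exp_eq : exp ℚ = 1 + X * B := by rw [X_mul_B]; ring

lemma UE_val : (UE : ℚ⟦X⟧) = exp ℚ := isUnit_exp.unit_spec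

lemma step_mul (m : ℤ) (k : ℕ) :
    ((UE ^ (m+1) : (ℚ⟦X⟧)ˣ) : ℚ⟦X⟧) * Bi ^ (k+1)
      = ((UE ^ m : (ℚ⟦X⟧)ˣ) : ℚ⟦X⟧) * Bi ^ (k+1)
        + X * (((UE ^ m : (ℚ⟦X⟧)ˣ) : ℚ⟦X⟧) * Bi ^ k) := by
  rw [zpow_add_one, Units.val_mul, UE_val, exp_eq]
  linear_combination (X * ((UE ^ m : (ℚ⟦X⟧)ˣ) : ℚ⟦X⟧) * Bi ^ k) * B_mul_Bi

lemma constCoeff_UE_zpow (m : ℤ) :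
    constantCoeff ((UE ^ m : (ℚ⟦X⟧)ˣ) : ℚ⟦X⟧) = 1 := by
  have h1 : Units.map (constantCoeff : ℚ⟦X⟧ →+* ℚ).toMonoidHom UE = 1 := by
    ext
    simp [UE_val, constantCoeff_exp]
  calc constantCoeff ((UE ^ m : (ℚ⟦X⟧)ˣ) : ℚ⟦X⟧)
      = ((Units.map (constantCoeff : ℚ⟦X⟧ →+* ℚ).toMonoidHom (UE ^ m) : ℚˣ) : ℚ) := rfl
    _ = (((Units.map (constantCoeff : ℚ⟦X⟧ →+* ℚ).toMonoidHom UE) ^ m : ℚˣ) : ℚ) := by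
        rw [map_zpow]
    _ = 1 := by rw [h1, one_zpow, Units.val_one]

lemma constCoeff_Bi : constantCoeff Bi = 1 := by
  have h := congrArg (constantCoeff) B_mul_Bi
  rw [map_mul, map_one] at h
  have hB0 : constantCoeff B = 1 := by
    simp [B, ← coeff_zero_eq_constantCoeff_apply]
  rw [hB0, one_mul] at h
  exact h

lemma key2 (k : ℕ) (m : ℤ) :
    coeff k (((UE ^ m : (ℚ⟦X⟧)ˣ) : ℚ⟦X⟧) * Bi ^ (k+1))
      = Ring.choose ((m : ℚ) - 1) k := by
  induction k generalizing m with
  | zero =>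
    rw [Ring.choose_zero_right]
    rw [coeff_zero_eq_constantCoeff_apply, map_mul, constCoeff_UE_zpow, map_pow, constCoeff_Bi]
    simp
  | succ k ih =>
    -- step relation for the function f m := coeff(k+1)(em Bi^(k+2)) - choose(m-1,k+1)
    have hstep : ∀ m : ℤ,
        coeff (k+1) (((UE ^ (m+1) : (ℚ⟦X⟧)ˣ) : ℚ⟦X⟧) * Bi ^ (k+2))
          - Ring.choose (((m+1 : ℤ) : ℚ) - 1) (k+1)
        = coeff (k+1) (((UE ^ m : (ℚ⟦X⟧)ˣ) : ℚ⟦X⟧) * Bi ^ (k+2))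
          - Ring.choose ((m : ℚ) - 1) (k+1) := by
      intro m
      have h1 := congrArg (coeff (k+1)) (step_mul m (k+1))
      rw [map_add, PowerSeries.coeff_succ_X_mul, ih m] at h1
      have h2 : Ring.choose (((m+1 : ℤ) : ℚ) - 1) (k+1)
          = Ring.choose ((m : ℚ) - 1) k + Ring.choose ((m : ℚ) - 1) (k+1) := by
        have := Ring.choose_succ_succ ((m : ℚ) - 1) k
        rw [sub_add_cancel] at this
        push_cast
        rw [add_sub_cancel_right, this]
      rw [h1, h2]
      ring
    have hanchor : coeff (k+1) (((UE ^ (1:ℤ) : (ℚ⟦X⟧)ˣ) : ℚ⟦X⟧) * Bi ^ (k+2))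
        - Ring.choose (((1:ℤ) : ℚ) - 1) (k+1) = 0 := by
      rw [zpow_one, UE_val, show k+2 = (k+1)+1 from rfl,
        coeff_exp_mul_Bi (k+1) (Nat.succ_pos k),
        show ((1:ℤ) : ℚ) - 1 = 0 by norm_num, Ring.choose_zero_succ]
      ring
    -- general m via integer induction from 1
    have hall : ∀ j : ℤ,
        coeff (k+1) (((UE ^ (1 + j) : (ℚ⟦X⟧)ˣ) : ℚ⟦X⟧) * Bi ^ (k+2))
          - Ring.choose (((1 + j : ℤ) : ℚ) - 1) (k+1) = 0 := by
      intro j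
      induction j using Int.induction_on with
      | zero => simpa using hanchor
      | succ j hj =>
        have h := hstep (1 + (j : ℤ))
        rw [show (1 : ℤ) + ((j : ℤ) + 1) = 1 + (j : ℤ) + 1 by ring, h, hj]
      | pred j hj =>
        have h := hstep (1 + (-(j : ℤ) - 1))
        rw [show (1 : ℤ) + (-(j : ℤ) - 1) + 1 = 1 + -(j : ℤ) by ring] at h
        rw [h] at hj
        exact hj
    have := hall (m - 1)
    rw [show (1 : ℤ) + (m - 1) = m by ring] at this
    linarith [this]

/-- `E = e^y` as a formal Laurent series over `ℚ`. -/
noncomputable def E : LaurentSeries ℚ := HahnSeries.ofPowerSeries ℤ ℚ (PowerSeries.exp ℚ)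

lemma E_zpow (m : ℤ) :
    E ^ m = HahnSeries.ofPowerSeries ℤ ℚ ((UE ^ m : (ℚ⟦X⟧)ˣ) : ℚ⟦X⟧) := by
  have hcoe : ∀ u : (ℚ⟦X⟧)ˣ, HahnSeries.ofPowerSeries ℤ ℚ (u : ℚ⟦X⟧)
      = ((Units.map (HahnSeries.ofPowerSeries ℤ ℚ).toMonoidHom u : (LaurentSeries ℚ)ˣ) :
          LaurentSeries ℚ) := fun u => (Units.coe_map _ u).symm
  rw [hcoe, map_zpow, Units.val_zpow_eq_zpow_val, ← hcoe]
  rw [UE_val]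
  rfl

lemma E_sub_one : E - 1 = HahnSeries.single (1:ℤ) (1:ℚ) * HahnSeries.ofPowerSeries ℤ ℚ B := by
  rw [← HahnSeries.ofPowerSeries_X, ← map_mul, X_mul_B, map_sub, map_one]
  rfl

lemma single_one_inv :
    (HahnSeries.single (1:ℤ) (1:ℚ) : LaurentSeries ℚ)⁻¹ = HahnSeries.single (-1:ℤ) (1:ℚ) := by
  refine inv_eq_of_mul_eq_one_right ?_
  rw [HahnSeries.single_mul_single]
  norm_num

lemma ofB_inv : (HahnSeries.ofPowerSeries ℤ ℚ B)⁻¹ = HahnSeries.ofPowerSeries ℤ ℚ Bi := by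
  refine inv_eq_of_mul_eq_one_right ?_
  rw [← map_mul, B_mul_Bi, map_one]

lemma E_sub_one_pow_inv (n : ℕ) :
    (((E - 1) ^ n : LaurentSeries ℚ))⁻¹
      = HahnSeries.single (-(n:ℤ)) (1:ℚ) * HahnSeries.ofPowerSeries ℤ ℚ (Bi ^ n) := by
  rw [E_sub_one, ← inv_pow, mul_inv, single_one_inv, ofB_inv, mul_pow,
    HahnSeries.single_pow, ← map_pow, one_pow, show (n • (-1:ℤ)) = -(n:ℤ) by simp]

/-- For any `m : ℤ` and `n > 0`, the formal residue (coefficient of `y⁻¹`) of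
`e^{my}/(e^y-1)^n` equals the generalized binomial coefficient `(m-1).choose (n-1)`,
i.e. `(m-1)(m-2)⋯(m-n+1)/(n-1)!`. -/
theorem stmt2 (m : ℤ) (n : ℕ) (hn : 0 < n) :
    ((E ^ m) * ((E - 1) ^ (n : ℤ))⁻¹).coeff (-1)
      = Ring.choose ((m : ℚ) - 1) (n - 1) := by
  obtain ⟨k, rfl⟩ : ∃ k, n = k + 1 := ⟨n - 1, (Nat.succ_pred_eq_of_pos hn).symm⟩
  rw [zpow_natCast, E_sub_one_pow_inv, E_zpow, ← mul_assoc,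
    mul_comm (HahnSeries.ofPowerSeries ℤ ℚ _) (HahnSeries.single _ _), mul_assoc, ← map_mul]
  rw [show (-1 : ℤ) = ((k : ℤ)) + (-((k+1 : ℕ) : ℤ)) by push_cast; ring,
    HahnSeries.coeff_single_mul_add, one_mul]
  rw [show ((k : ℤ)) = (((k : ℕ) : ℤ)) from rfl, HahnSeries.ofPowerSeries_apply_coeff]
  rw [key2 k m]
  simp
end

section
/- Define Bernoulli-type numbers q^{(m,n)}_{-n+j} for m, n \in \mathbb{Z}, j \geq 0 by the Laurent expansion e^{mx}/(e^x-1)^n = \sum_{j \geq 0} q^{(m,n)}_{-n+j} x^{-n+j}. Then for all m, n \in \mathbb{Z} and all k \in \mathbb{Z}: q^{(1,1)}_{-m-n-1} = \sum_{k=m}^{-n} q^{(1,k+1)}_{-m-1} q^{(1,-k+1)}_{-n-1}, where the sum is finite because q^{(1,k+1)}_{-m-1} = 0 for k < m and q^{(1,-k+1)}_{-n-1} = 0 for k > -n. -/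
noncomputable section Stmt5Aux

open PowerSeries

namespace Stmt5Aux

abbrev PS := PowerSeries ℚ

def e : PS := PowerSeries.exp ℚ

def s : PS := PowerSeries.mk fun i => ((i+1).factorial : ℚ)⁻¹

lemma coeff_e (n : ℕ) : coeff n e = (n.factorial : ℚ)⁻¹ := by
  simp [e, coeff_exp, one_div]

lemma coeff_s (n : ℕ) : coeff n s = ((n+1).factorial : ℚ)⁻¹ := by
  simp [s]

lemma const_e : constantCoeff e = 1 := by
  rw [← coeff_zero_eq_constantCoeff_apply, coeff_e]; simp

lemma const_s : constantCoeff s = 1 := by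
  rw [← coeff_zero_eq_constantCoeff_apply, coeff_s]; simp

lemma e_eq : e = 1 + X * s := by
  ext n
  cases n with
  | zero => simp [coeff_zero_eq_constantCoeff_apply, const_e]
  | succ n => simp [coeff_e, coeff_s, coeff_succ_X_mul, coeff_one]

def Su : PSˣ := (PowerSeries.isUnit_iff_constantCoeff.mpr (by rw [const_s]; exact isUnit_one)).unit

lemma Su_val : (Su : PS) = s := rfl

def g (j : ℤ) : PS := e * ((Su ^ (-j) : PSˣ) : PS)

end Stmt5Aux

noncomputable section Stmt5Aux2
namespace Stmt5Aux
open PowerSeries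

local notation "dd" => PowerSeries.derivative ℚ

lemma d_e : dd e = e := by
  ext n
  rw [coeff_derivative, coeff_e, coeff_e]
  rw [Nat.factorial_succ]
  have h1 : ((n+1 : ℕ).factorial : ℚ) ≠ 0 := Nat.cast_ne_zero.mpr (Nat.factorial_ne_zero _)
  have h2 : ((n : ℕ).factorial : ℚ) ≠ 0 := Nat.cast_ne_zero.mpr (Nat.factorial_ne_zero _)
  rw [Nat.factorial_succ] at h1
  push_cast at h1 ⊢
  field_simp

lemma d_s : X * dd s = e - s := by
  ext n
  cases n with
  | zero =>
      simp [coeff_zero_eq_constantCoeff_apply, const_e, const_s]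
  | succ n =>
      rw [coeff_succ_X_mul, coeff_derivative, map_sub, coeff_e, coeff_s]
      have h1 : ((n+1 : ℕ).factorial : ℚ) ≠ 0 := Nat.cast_ne_zero.mpr (Nat.factorial_ne_zero _)
      have h2 : ((n+2 : ℕ).factorial : ℚ) ≠ 0 := Nat.cast_ne_zero.mpr (Nat.factorial_ne_zero _)
      have hfac : ((n+2 : ℕ).factorial : ℚ) = (n+2) * ((n+1).factorial : ℚ) := by
        rw [show n+2 = (n+1)+1 from rfl, Nat.factorial_succ]; push_cast; ring
      rw [show n+1+1 = n+2 from rfl]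
      rw [hfac] at h2 ⊢
      push_cast at h1 h2 ⊢
      field_simp
      ring

lemma d_unit_pow_succ (u : PSˣ) (n : ℕ) :
    dd ((u : PS) ^ (n+1)) = ((n+1 : ℕ) : PS) * (u : PS) ^ n * dd (u : PS) := by
  induction n with
  | zero => simp
  | succ n ih =>
      rw [pow_succ, Derivation.leibniz, smul_eq_mul, smul_eq_mul, ih]
      push_cast
      ring

lemma d_unit_inv (u : PSˣ) :
    dd ((u⁻¹ : PSˣ) : PS) = -(((u⁻¹ : PSˣ) : PS) * ((u⁻¹ : PSˣ) : PS)) * dd (u : PS) := by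
  have h : ((u : PS) * ((u⁻¹ : PSˣ) : PS)) = 1 := Units.mul_inv u
  have h2 : (u : PS) • dd ((u⁻¹ : PSˣ) : PS) + ((u⁻¹ : PSˣ) : PS) • dd (u : PS) = 0 := by
    rw [← Derivation.leibniz, h, Derivation.map_one_eq_zero]
  simp only [smul_eq_mul] at h2
  have h4 : ((u⁻¹ : PSˣ) : PS) * (u : PS) = 1 := Units.inv_mul u
  linear_combination (((u⁻¹ : PSˣ) : PS)) * h2 - dd ((u⁻¹ : PSˣ) : PS) * h4

lemma d_unit_zpow (u : PSˣ) (z : ℤ) :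
    dd ((u ^ z : PSˣ) : PS) = (C (z : ℚ)) * ((u ^ (z-1) : PSˣ) : PS) * dd (u : PS) := by
  cases z with
  | ofNat n =>
      cases n with
      | zero => simp
      | succ n =>
          have h1 : ((u ^ (Int.ofNat (n+1)) : PSˣ) : PS) = (u : PS) ^ (n+1) := by
            rw [Int.ofNat_eq_natCast, zpow_natCast, Units.val_pow_eq_pow_val]
          have h2 : ((u ^ ((Int.ofNat (n+1)) - 1) : PSˣ) : PS) = (u : PS) ^ n := by
            rw [show (Int.ofNat (n+1)) - 1 = (n : ℤ) by
                  rw [Int.ofNat_eq_natCast]; push_cast; ring,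
              zpow_natCast, Units.val_pow_eq_pow_val]
          rw [h1, h2, d_unit_pow_succ]
          have hC : C ((Int.ofNat (n+1) : ℤ) : ℚ) = ((n+1 : ℕ) : PS) := by
            have h3 : ((Int.ofNat (n+1) : ℤ) : ℚ) = ((n+1:ℕ) : ℚ) := by
              rw [Int.ofNat_eq_natCast]; push_cast; ring
            rw [h3, map_natCast]
          rw [hC]
  | negSucc n =>
      have hz : Int.negSucc n = -((n+1 : ℕ) : ℤ) := by simp [Int.negSucc_eq]
      have hv : (u ^ Int.negSucc n : PSˣ) = (u ^ (n+1))⁻¹ := by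
        rw [hz, zpow_neg, zpow_natCast]
      have hsplit : (u ^ (Int.negSucc n - 1) : PSˣ) = (u ^ (n+1))⁻¹ * (u ^ (n+1))⁻¹ * u ^ n := by
        have h1 : Int.negSucc n - 1 = (-((n+1:ℕ):ℤ)) + (-((n+1:ℕ):ℤ)) + (n:ℤ) := by
          rw [hz]; push_cast; ring
        rw [h1, zpow_add, zpow_add, zpow_neg, zpow_natCast, zpow_natCast]
      rw [hv, hsplit]
      rw [d_unit_inv (u ^ (n+1)), Units.val_pow_eq_pow_val, d_unit_pow_succ]
      rw [Units.val_mul, Units.val_mul, Units.val_pow_eq_pow_val]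
      have hC : C ((Int.negSucc n : ℤ) : ℚ) = -(((n+1:ℕ) : ℚ⟦X⟧)) := by
        have h3 : ((Int.negSucc n : ℤ) : ℚ) = -((n+1:ℕ) : ℚ) := by
          rw [hz]; push_cast; ring
        rw [h3, map_neg, map_natCast]
      rw [hC]
      ring

lemma g_succ (k : ℤ) : g k = s * g (k+1) := by
  unfold g
  have h : (-k) = 1 + (-(k+1)) := by ring
  rw [h, zpow_add, zpow_one, Units.val_mul, Su_val]
  ring

lemma e_mul_g (k : ℤ) : e * g (k+1) = X * g k + g (k+1) := by
  linear_combination g (k+1) * e_eq - X * g_succ k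

lemma d_g (k : ℤ) : dd (g k) = g k - C (k:ℚ) * g (k+1) * dd s := by
  unfold g
  rw [Derivation.leibniz, smul_eq_mul, smul_eq_mul, d_unit_zpow, d_e]
  have h : (-k) - 1 = -(k+1) := by ring
  rw [h]
  have hC : C ((-k : ℤ) : ℚ) = - C ((k:ℤ):ℚ) := by push_cast; rw [map_neg]
  have hsu : dd (Su : PS) = dd s := rfl
  rw [hC, hsu]
  ring

lemma PB (k : ℤ) : X * (dd (g (k+1)) + C (k:ℚ) * g (k+1))
    = C (k:ℚ) * (g (k+1) - g (k+2)) + (g (k+1) - g (k+2)) := by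
  have hd := d_g (k+1)
  have hds := d_s
  have hem := e_mul_g (k+1)
  have hsg := g_succ (k+1)
  have hi : (k+1)+1 = k+2 := by ring
  rw [hi] at hd hem hsg
  have hC : C ((k+1 : ℤ) : ℚ) = C (k:ℚ) + 1 := by push_cast; rw [map_add, map_one]
  rw [hC] at hd
  linear_combination X * hd + (-(C (k:ℚ)+1) * g (k+2)) * hds
    + (-(C (k:ℚ)+1)) * hem + (-(C (k:ℚ)+1)) * hsg

def f (μ : ℤ) : PS := PowerSeries.mk fun i => coeff i (g (μ + i + 1))

lemma coeff_f (μ : ℤ) (i : ℕ) : coeff i (f μ) = coeff i (g (μ + i + 1)) := by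
  simp [f]

lemma const_g (j : ℤ) : constantCoeff (g j) = 1 := by
  unfold g
  rw [map_mul, const_e, one_mul]
  have h1 : constantCoeff ((Su ^ (-j) : PSˣ) : PS)
      = ((Units.map (constantCoeff (R := ℚ)).toMonoidHom (Su ^ (-j))) : ℚ) := rfl
  rw [h1, map_zpow]
  have h2 : Units.map (constantCoeff (R := ℚ)).toMonoidHom Su = 1 := by
    ext
    simp [Su_val, const_s]
  rw [h2, one_zpow, Units.val_one]

lemma coeff_zero_f (μ : ℤ) : coeff 0 (f μ) = 1 := by
  rw [coeff_f, coeff_zero_eq_constantCoeff_apply, const_g]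

lemma coeffA (a : ℚ) (φ : PS) (j : ℕ) :
    coeff j (C a * φ + X * dd φ) = (a + j) * coeff j φ := by
  cases j with
  | zero =>
      have hx : coeff 0 (X * dd φ) = 0 := by
        rw [coeff_zero_eq_constantCoeff_apply, map_mul, constantCoeff_X, zero_mul]
      rw [map_add, coeff_C_mul, hx]
      push_cast
      ring
  | succ j =>
      rw [map_add, coeff_C_mul, coeff_succ_X_mul, coeff_derivative]
      push_cast
      ring

lemma Bser (μ : ℤ) :
    (1 + X) * (C (μ:ℚ) * f μ + X * dd (f μ)) = C (μ:ℚ) * f (μ-1) := by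
  ext j
  rw [add_mul, one_mul, map_add, coeffA, coeff_C_mul]
  cases j with
  | zero =>
      have hx : coeff 0 (X * (C (μ:ℚ) * f μ + X * dd (f μ))) = 0 := by
        rw [coeff_zero_eq_constantCoeff_apply, map_mul, constantCoeff_X, zero_mul]
      rw [hx, coeff_zero_f, coeff_zero_f]
      push_cast; ring
  | succ j =>
      rw [coeff_succ_X_mul, coeffA]
      rw [coeff_f μ (j+1), coeff_f μ j, coeff_f (μ-1) (j+1)]
      have e1 : μ + ((j+1 : ℕ) : ℤ) + 1 = (μ + j) + 2 := by push_cast; ring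
      have e2 : μ + ((j : ℕ) : ℤ) + 1 = (μ + j) + 1 := by push_cast; ring
      have e3 : μ - 1 + ((j+1 : ℕ) : ℤ) + 1 = (μ + j) + 1 := by push_cast; ring
      rw [e1, e2, e3]
      have hPB := congrArg (coeff (j+1)) (PB (μ+j))
      rw [coeff_succ_X_mul, map_add, coeff_C_mul, coeff_derivative, map_add, map_sub,
        coeff_C_mul, map_sub] at hPB
      push_cast at hPB ⊢
      linear_combination hPB

lemma Cprime (μ : ℤ) (j : ℕ) :
    coeff j (f μ) = ∑ i ∈ Finset.range (j+1),
      ((i+1).factorial : ℚ)⁻¹ * coeff (j-i) (f (μ+i+1)) := by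
  rw [coeff_f, g_succ (μ + j + 1)]
  have e1 : μ + (j:ℤ) + 1 + 1 = μ + j + 2 := by ring
  rw [e1, coeff_mul, Finset.Nat.sum_antidiagonal_eq_sum_range_succ_mk]
  apply Finset.sum_congr rfl
  intro i hi
  have hij : i ≤ j := Nat.lt_succ_iff.mp (Finset.mem_range.mp hi)
  rw [coeff_s, coeff_f]
  congr 2
  push_cast [hij]
  ring

lemma f_zero : f 0 = 1 := by
  have hB := Bser 0
  simp only [Int.cast_zero, map_zero, zero_mul, zero_add] at hB
  have h1X : (1 + X : PS) ≠ 0 := by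
    intro h
    have := congrArg (constantCoeff) h
    simp at this
  have hX : (X : PS) ≠ 0 := X_ne_zero
  have hd : dd (f 0) = 0 := by
    rcases mul_eq_zero.mp hB with h | h
    · exact absurd h h1X
    · rcases mul_eq_zero.mp h with h' | h'
      · exact absurd h' hX
      · exact h'
  ext j
  cases j with
  | zero => rw [coeff_zero_f, coeff_zero_eq_constantCoeff_apply, map_one]
  | succ j =>
      have := congrArg (coeff j) hd
      rw [coeff_derivative, map_zero] at this
      have hj : ((j:ℚ) + 1) ≠ 0 := by positivity
      have := mul_eq_zero.mp this
      rcases this with h | h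
      · rw [h, coeff_one]; simp
      · exact absurd h hj

def w : PS := f 1

lemma const_w : constantCoeff w = 1 := by
  rw [← coeff_zero_eq_constantCoeff_apply, w, coeff_zero_f]

def Wu : PSˣ := (PowerSeries.isUnit_iff_constantCoeff.mpr
  (by rw [const_w]; exact isUnit_one)).unit

lemma Wu_val : (Wu : PS) = w := rfl

lemma hW : (1 + X) * (w + X * dd w) = 1 := by
  have hB := Bser 1
  simp only [Int.cast_one, map_one, one_mul] at hB
  rw [show (1:ℤ) - 1 = 0 from rfl, f_zero] at hB
  exact hB

lemma Wzpow (z : ℤ) :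
    (1 + X) * (C (z:ℚ) * ((Wu^z : PSˣ) : PS) + X * dd ((Wu^z : PSˣ) : PS))
    = C (z:ℚ) * ((Wu^(z-1) : PSˣ) : PS) := by
  have hd := d_unit_zpow Wu z
  have hmul : ((Wu^(z-1) : PSˣ) : PS) * w = ((Wu^z : PSˣ) : PS) := by
    rw [← Wu_val, ← Units.val_mul, ← zpow_add_one]
    congr 1
    congr 1
    ring
  have hw := hW
  have hdw : dd (Wu : PS) = dd w := rfl
  rw [hd, hdw]
  linear_combination C (z:ℚ) * ((Wu^(z-1) : PSˣ) : PS) * hw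
    - (C (z:ℚ) + C (z:ℚ) * X) * hmul

lemma one_add_X_ne : (1 + X : PS) ≠ 0 := by
  intro h
  have := congrArg (constantCoeff) h
  simp at this

lemma FEQ_nat (n : ℕ) : f (n : ℤ) = ((Wu ^ ((n:ℕ) : ℤ) : PSˣ) : PS) := by
  induction n with
  | zero => simp [f_zero]
  | succ n ih =>
      set z : ℤ := ((n:ℕ):ℤ) + 1 with hzdef
      have hB := Bser z
      have hw := Wzpow z
      have hz1 : (z - 1 : ℤ) = ((n:ℕ) : ℤ) := by omega
      rw [hz1, ih] at hB
      set Wk : PS := ((Wu ^ z : PSˣ) : PS) with hWk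
      rw [hz1] at hw
      set h : PS := f z - Wk with hh
      have key : C (z:ℚ) * h + X * dd h = 0 := by
        apply mul_left_cancel₀ one_add_X_ne
        rw [mul_zero, hh, map_sub]
        linear_combination hB - hw
      have hcoeff : ∀ j : ℕ, coeff j h = 0 := by
        intro j
        have := congrArg (coeff j) key
        rw [coeffA, map_zero] at this
        have hz : ((z:ℚ) + j) ≠ 0 := by
          rw [hzdef]; push_cast; positivity
        exact (mul_eq_zero.mp this).resolve_left hz
      have : h = 0 := by ext j; rw [hcoeff, map_zero]
      have := sub_eq_zero.mp this
      rw [show ((Nat.succ n : ℕ) : ℤ) = z by omega]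
      exact this

lemma f_nat_pow (n : ℕ) : f (n : ℤ) = w ^ n := by
  rw [FEQ_nat, zpow_natCast, Units.val_pow_eq_pow_val, Wu_val]

lemma coeff_mul_congr (b a a' : PS) (j : ℕ) (h : ∀ q ≤ j, coeff q a = coeff q a') :
    coeff j (b * a) = coeff j (b * a') := by
  rw [coeff_mul, coeff_mul]
  apply Finset.sum_congr rfl
  intro p hp
  have hp2 : p.1 + p.2 = j := Finset.HasAntidiagonal.mem_antidiagonal.mp hp
  rw [h p.2 (by omega)]

def F (j : ℕ) : PS :=
  ∑ i ∈ Finset.range (j+1), C (((i+1).factorial : ℚ)⁻¹) * (X^i * f i)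

lemma coeff_F (q j : ℕ) (hq : q ≤ j) : coeff q (f (-1)) = coeff q (F j) := by
  unfold F
  rw [map_sum, Cprime (-1) q]
  have hsplit := Finset.sum_range_add_sum_Ico
    (fun i => coeff q (C (((i+1).factorial : ℚ)⁻¹) * (X^i * f i)))
    (Nat.succ_le_succ hq)
  rw [← hsplit]
  have hIco : ∑ i ∈ Finset.Ico (q+1) (j+1),
      coeff q (C (((i+1).factorial : ℚ)⁻¹) * (X^i * f i)) = 0 := by
    apply Finset.sum_eq_zero
    intro i hi
    have : ¬ (i ≤ q) := by
      have := (Finset.mem_Ico.mp hi).1; omega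
    rw [coeff_C_mul, coeff_X_pow_mul', if_neg this, mul_zero]
  rw [hIco, add_zero]
  apply Finset.sum_congr rfl
  intro i hi
  have hiq : i ≤ q := by have := Finset.mem_range.mp hi; omega
  beta_reduce
  rw [coeff_C_mul, coeff_X_pow_mul', if_pos hiq,
    show (-1 : ℤ) + (i:ℤ) + 1 = ((i:ℕ) : ℤ) by ring]

lemma w_mul_f (i : ℕ) : w * f ((i:ℕ) : ℤ) = f (((i:ℕ) : ℤ) + 1) := by
  rw [f_nat_pow, show ((i:ℕ) : ℤ) + 1 = ((i+1 : ℕ) : ℤ) by push_cast; ring, f_nat_pow, pow_succ]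
  ring

lemma w_mul_f_neg_one : w * f (-1) = 1 := by
  ext j
  rw [coeff_mul_congr w (f (-1)) (F j) j (fun q hq => coeff_F q j hq)]
  unfold F
  rw [Finset.mul_sum, map_sum]
  have h0 := Cprime 0 j
  rw [f_zero] at h0
  rw [h0]
  apply Finset.sum_congr rfl
  intro i hi
  have hij : i ≤ j := by have := Finset.mem_range.mp hi; omega
  have hre : w * (C (((i+1).factorial : ℚ)⁻¹) * (X^i * f i))
      = C (((i+1).factorial : ℚ)⁻¹) * (X^i * (w * f ((i:ℕ):ℤ))) := by ring
  rw [hre, w_mul_f, coeff_C_mul, coeff_X_pow_mul', if_pos hij,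
    show (0 : ℤ) + (i:ℤ) + 1 = ((i:ℕ) : ℤ) + 1 by ring]

lemma f_neg_one : f (-1) = ((Wu^(-1:ℤ) : PSˣ) : PS) := by
  have h := w_mul_f_neg_one
  calc f (-1) = ((Wu⁻¹ : PSˣ) : PS) * (w * f (-1)) := by
        rw [← mul_assoc, ← Wu_val, ← Units.val_mul]; simp
    _ = ((Wu⁻¹ : PSˣ) : PS) := by rw [h, mul_one]
    _ = ((Wu^(-1:ℤ) : PSˣ) : PS) := by rw [zpow_neg_one]

lemma C_int_ne_zero {z : ℤ} (hz : z ≠ 0) : (C (z:ℚ)) ≠ 0 := by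
  intro h
  have := congrArg (constantCoeff) h
  rw [constantCoeff_C, map_zero] at this
  exact hz (by exact_mod_cast this)

lemma FEQ (z : ℤ) : f z = ((Wu^z : PSˣ) : PS) := by
  cases z with
  | ofNat n => rw [Int.ofNat_eq_natCast]; exact FEQ_nat n
  | negSucc n =>
      induction n with
      | zero => exact f_neg_one
      | succ n ih =>
          have hB := Bser (Int.negSucc n)
          have hw := Wzpow (Int.negSucc n)
          rw [ih] at hB
          have heq : C ((Int.negSucc n : ℤ) : ℚ) * f (Int.negSucc n - 1)
              = C ((Int.negSucc n : ℤ) : ℚ) * ((Wu^((Int.negSucc n : ℤ) - 1) : PSˣ) : PS) := by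
            rw [← hB, ← hw]
          have hne : (Int.negSucc n : ℤ) ≠ 0 := by rw [Int.negSucc_eq]; omega
          have := mul_left_cancel₀ (C_int_ne_zero hne) heq
          rw [show Int.negSucc (n+1) = Int.negSucc n - 1 by
            simp [Int.negSucc_eq]; ring]
          exact this

lemma fmul (a b : ℤ) : f a * f b = f (a+b) := by
  rw [FEQ, FEQ, FEQ, ← Units.val_mul, ← zpow_add]

end Stmt5Aux
end Stmt5Aux2

/-- `q n k` is the Bernoulli-type number `q^{(1,n)}_k`, the coefficient of `x^k` in the
formal Laurent expansion of `e^x/(e^x-1)^n`. -/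
noncomputable def q (n k : ℤ) : ℚ := (E * ((E - 1) ^ n)⁻¹).coeff k

noncomputable section Stmt5Aux3
namespace Stmt5Aux
open PowerSeries

lemma P_zpow (z : ℤ) :
    (HahnSeries.ofPowerSeries ℤ ℚ s) ^ z
      = HahnSeries.ofPowerSeries ℤ ℚ ((Su^z : PSˣ) : PS) := by
  have key : ∀ y : ℤ, (HahnSeries.ofPowerSeries ℤ ℚ ((Su^y : PSˣ) : PS)) *
      (HahnSeries.ofPowerSeries ℤ ℚ ((Su^(-y) : PSˣ) : PS)) = 1 := by
    intro y
    rw [← map_mul, ← Units.val_mul, ← zpow_add]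
    simp
  cases z with
  | ofNat n =>
      rw [Int.ofNat_eq_natCast, zpow_natCast, ← map_pow,
        show (s:PS)^n = ((Su^((n:ℕ):ℤ) : PSˣ) : PS) by
          rw [zpow_natCast, Units.val_pow_eq_pow_val, Su_val]]
  | negSucc n =>
      rw [zpow_negSucc, ← map_pow]
      symm
      apply eq_inv_of_mul_eq_one_left
      have h1 : (s : PS)^(n+1) = ((Su^(((n+1:ℕ)):ℤ) : PSˣ) : PS) := by
        rw [zpow_natCast, Units.val_pow_eq_pow_val, Su_val]
      rw [h1]
      have h2 : (((n+1:ℕ)):ℤ) = -(Int.negSucc n) := by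
        rw [Int.negSucc_eq]; push_cast; ring
      rw [h2]
      exact key (Int.negSucc n)

lemma E_sub_one : E - 1 = (HahnSeries.single (1:ℤ) (1:ℚ)) * HahnSeries.ofPowerSeries ℤ ℚ s := by
  unfold E
  rw [show PowerSeries.exp ℚ = Stmt5Aux.e from rfl, Stmt5Aux.e_eq, map_add, map_one, map_mul,
    HahnSeries.ofPowerSeries_X]
  ring

lemma ET_zpow (j : ℤ) : E * ((E - 1) ^ j)⁻¹
    = HahnSeries.single (-j) (1:ℚ) * HahnSeries.ofPowerSeries ℤ ℚ (g j) := by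
  rw [E_sub_one, ← zpow_neg, mul_zpow, ← RatFunc.single_zpow, P_zpow]
  have hE : E = HahnSeries.ofPowerSeries ℤ ℚ e := rfl
  rw [hE]
  unfold g
  rw [map_mul]
  ring

lemma q_eq (j c : ℤ) :
    q j c = if 0 ≤ c + j then coeff (c+j).toNat (g j) else 0 := by
  unfold q
  rw [ET_zpow]
  conv_lhs => rw [show c = (c + j) + (-j) by ring]
  rw [HahnSeries.coeff_single_mul_add, one_mul, PowerSeries.coeff_coe]
  by_cases h : 0 ≤ c + j
  · rw [if_neg (not_lt.mpr h), if_pos h]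
    have hn : (c+j).natAbs = (c+j).toNat := by omega
    rw [hn]
  · rw [if_pos (lt_of_not_ge h), if_neg h]

lemma q_eq_f (μ : ℤ) (i : ℕ) : q (μ + i + 1) (-μ - 1) = coeff i (f μ) := by
  rw [q_eq]
  have h : (-μ - 1) + (μ + i + 1) = ((i:ℕ) : ℤ) := by ring
  rw [h, if_pos (Int.natCast_nonneg i), Int.toNat_natCast, coeff_f]

lemma q_vanish (j c : ℤ) (h : c + j < 0) : q j c = 0 := by
  rw [q_eq, if_neg (by omega)]

end Stmt5Aux
end Stmt5Aux3

/-- For all `m n : ℤ`,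
`q^{(1,1)}_{-m-n-1} = ∑_{k=m}^{-n} q^{(1,k+1)}_{-m-1} q^{(1,-k+1)}_{-n-1}`,
the sum being finite since `q^{(1,k+1)}_{-m-1} = 0` for `k < m` and
`q^{(1,-k+1)}_{-n-1} = 0` for `k > -n`. -/
theorem stmt5 (m n : ℤ) :
    q 1 (-m - n - 1) = (∑ k ∈ Finset.Icc m (-n), q (k + 1) (-m - 1) * q (-k + 1) (-n - 1)) ∧
    (∀ k : ℤ, k < m → q (k + 1) (-m - 1) = 0) ∧
    (∀ k : ℤ, -n < k → q (-k + 1) (-n - 1) = 0) := by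
  refine ⟨?_, fun k hk => Stmt5Aux.q_vanish _ _ (by omega),
    fun k hk => Stmt5Aux.q_vanish _ _ (by omega)⟩
  by_cases hmn : m + n ≤ 0
  · have hN : (((-m-n).toNat : ℕ) : ℤ) = -m-n := Int.toNat_of_nonneg (by omega)
    set N : ℕ := (-m-n).toNat with hNdef
    have hL : q 1 (-m - n - 1) = PowerSeries.coeff N (Stmt5Aux.f (m+n)) := by
      have h1 := Stmt5Aux.q_eq_f (m+n) N
      rw [show (m+n) + ((N:ℕ):ℤ) + 1 = 1 by omega,
        show -(m+n) - 1 = -m-n-1 by ring] at h1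
      exact h1
    rw [hL, ← Stmt5Aux.fmul m n, PowerSeries.coeff_mul,
      Finset.Nat.sum_antidiagonal_eq_sum_range_succ_mk]
    refine Finset.sum_bij' (fun i _ => m + (i:ℤ)) (fun k _ => (k - m).toNat) ?_ ?_ ?_ ?_ ?_
    · intro a ha
      have := Finset.mem_range.mp ha
      beta_reduce
      rw [Finset.mem_Icc]
      omega
    · intro a ha
      have := Finset.mem_Icc.mp ha
      beta_reduce
      rw [Finset.mem_range]
      omega
    · intro a ha
      have := Finset.mem_range.mp ha
      beta_reduce
      omega
    · intro a ha
      have := Finset.mem_Icc.mp ha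
      beta_reduce
      omega
    · intro a ha
      have haN : a ≤ N := by have := Finset.mem_range.mp ha; omega
      have h1 := Stmt5Aux.q_eq_f m a
      have h2 := Stmt5Aux.q_eq_f n (N - a)
      rw [show n + ((N - a : ℕ) : ℤ) + 1 = -(m + (a:ℤ)) + 1 by push_cast [haN]; omega,
        show -n - 1 = -n-1 from rfl] at h2
      rw [show -m - 1 = -m-1 from rfl] at h1
      rw [← h1, ← h2]
  · rw [Finset.Icc_eq_empty (by omega), Finset.sum_empty]
    exact Stmt5Aux.q_vanish 1 (-m-n-1) (by omega)
end Stmt5Aux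
end

section
/- The coefficient of x^{-n+1} in the formal Laurent expansion of e^x/(e^x-1)^n equals -(n-2)/2, for every integer n. -/
open PowerSeries HahnSeries

noncomputable def g : PowerSeries ℚ := PowerSeries.mk fun n => 1 / (n + 1).factorial

lemma hg0 : PowerSeries.constantCoeff g = 1 := by
  simp [g, ← PowerSeries.coeff_zero_eq_constantCoeff]

lemma hg1 : PowerSeries.coeff 1 g = 1/2 := by
  simp [g]

lemma hXg : PowerSeries.exp ℚ - 1 = PowerSeries.X * g := by
  ext n
  cases n with
  | zero => simp [g, PowerSeries.coeff_exp]
  | succ m => simp [g, PowerSeries.coeff_exp, PowerSeries.coeff_succ_X_mul]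

noncomputable def gu : (PowerSeries ℚ)ˣ :=
  Units.mkOfMulEqOne g g⁻¹ (PowerSeries.mul_inv_cancel g (by rw [hg0]; norm_num))

lemma gu_val : (gu : PowerSeries ℚ) = g := rfl
lemma gu_inv_val : ((gu⁻¹ : (PowerSeries ℚ)ˣ) : PowerSeries ℚ) = g⁻¹ := rfl

lemma hinv0 : PowerSeries.constantCoeff g⁻¹ = 1 := by
  rw [PowerSeries.constantCoeff_inv, hg0]; norm_num

lemma hinv1 : PowerSeries.coeff 1 g⁻¹ = -(1/2) := by
  have h := PowerSeries.mul_inv_cancel g (by rw [hg0]; norm_num)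
  have h2 := congrArg (PowerSeries.coeff 1) h
  rw [PowerSeries.coeff_one_mul, hg0, hg1, hinv0] at h2
  simp at h2
  linarith

lemma gu_zpow (n : ℤ) :
    PowerSeries.constantCoeff ((gu ^ n : (PowerSeries ℚ)ˣ) : PowerSeries ℚ) = 1 ∧
    PowerSeries.coeff 1 ((gu ^ n : (PowerSeries ℚ)ˣ) : PowerSeries ℚ) = n / 2 := by
  induction n using Int.induction_on with
  | zero => simp
  | succ k ih =>
    rw [zpow_add_one, Units.val_mul, gu_val]
    constructor
    · rw [map_mul, ih.1, hg0, one_mul]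
    · rw [PowerSeries.coeff_one_mul, ih.1, ih.2, hg0, hg1]
      push_cast; ring
  | pred k ih =>
    have h : (gu ^ (-(k : ℤ) - 1) : (PowerSeries ℚ)ˣ) = gu ^ (-(k : ℤ)) * gu⁻¹ := by
      rw [← zpow_neg_one, ← zpow_add]; ring_nf
    rw [h, Units.val_mul, gu_inv_val]
    constructor
    · rw [map_mul, ih.1, hinv0, one_mul]
    · rw [PowerSeries.coeff_one_mul, ih.1, ih.2, hinv0, hinv1]
      push_cast; ring

noncomputable def su : (LaurentSeries ℚ)ˣ :=
  Units.mkOfMulEqOne (HahnSeries.single 1 1) (HahnSeries.single (-1) 1)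
    (by rw [HahnSeries.single_mul_single]; norm_num)

lemma su_val : (su : LaurentSeries ℚ) = HahnSeries.single 1 1 := rfl
lemma su_inv_val : ((su⁻¹ : (LaurentSeries ℚ)ˣ) : LaurentSeries ℚ) = HahnSeries.single (-1) 1 := rfl

lemma su_zpow (n : ℤ) : ((su ^ n : (LaurentSeries ℚ)ˣ) : LaurentSeries ℚ)
    = HahnSeries.single n 1 := by
  induction n using Int.induction_on with
  | zero => simp
  | succ k ih =>
    rw [zpow_add_one, Units.val_mul, ih, su_val, HahnSeries.single_mul_single, one_mul]
  | pred k ih =>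
    have h : (su ^ (-(k : ℤ) - 1) : (LaurentSeries ℚ)ˣ) = su ^ (-(k : ℤ)) * su⁻¹ := by
      rw [← zpow_neg_one, ← zpow_add]; ring_nf
    rw [h, Units.val_mul, ih, su_inv_val, HahnSeries.single_mul_single, one_mul,
      show (-(k:ℤ) + -1) = (-(k:ℤ) - 1) by ring]

noncomputable def w : (LaurentSeries ℚ)ˣ :=
  su * Units.map (HahnSeries.ofPowerSeries ℤ ℚ).toMonoidHom gu

lemma hEw : E - 1 = (w : LaurentSeries ℚ) := by
  have h : E - 1 = HahnSeries.ofPowerSeries ℤ ℚ (PowerSeries.exp ℚ - 1) := by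
    simp [E, map_sub]
  rw [h, hXg, map_mul, HahnSeries.ofPowerSeries_X]
  rfl

/-- The coefficient of `x^{-n+1}` in `e^x/(e^x-1)^n` is `-(n-2)/2`. -/
theorem stmt7 (n : ℤ) : q n (-n + 1) = -((n : ℚ) - 2) / 2 := by
  have h1 : ((E - 1) ^ n)⁻¹ = ((w ^ (-n) : (LaurentSeries ℚ)ˣ) : LaurentSeries ℚ) := by
    rw [hEw, ← Units.val_zpow_eq_zpow_val, ← Units.val_inv_eq_inv_val, ← zpow_neg]
  have h2 : (w ^ (-n) : (LaurentSeries ℚ)ˣ) =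
      su ^ (-n) * Units.map (HahnSeries.ofPowerSeries ℤ ℚ).toMonoidHom (gu ^ (-n)) := by
    have h := mul_zpow su (Units.map (HahnSeries.ofPowerSeries ℤ ℚ).toMonoidHom gu) (-n)
    rw [show w ^ (-n) = _ from h, map_zpow]
  rw [q, h1, h2, Units.val_mul, su_zpow]
  have h3 : E * (HahnSeries.single (-n) 1 *
      ((Units.map (HahnSeries.ofPowerSeries ℤ ℚ).toMonoidHom (gu ^ (-n)) : (LaurentSeries ℚ)ˣ)
        : LaurentSeries ℚ)) =
      HahnSeries.single (-n) 1 * HahnSeries.ofPowerSeries ℤ ℚ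
        (PowerSeries.exp ℚ * ((gu ^ (-n) : (PowerSeries ℚ)ˣ) : PowerSeries ℚ)) := by
    rw [map_mul]
    show E * (_ * HahnSeries.ofPowerSeries ℤ ℚ _) = _
    rw [E]; ring
  rw [h3]
  have h4 : (-n + 1 : ℤ) = ((1 : ℕ) : ℤ) + (-n) := by omega
  rw [h4, HahnSeries.coeff_single_mul_add, HahnSeries.ofPowerSeries_apply_coeff, one_mul,
    PowerSeries.coeff_one_mul]
  obtain ⟨ha, hb⟩ := gu_zpow (-n)
  rw [ha, hb]
  simp [PowerSeries.coeff_exp, PowerSeries.constantCoeff_exp]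
  ring
end

section
/- For each fixed j \geq 0, the coefficient q^{(1,n)}_{-n+j} of x^{-n+j} in the formal Laurent expansion of e^x/(e^x-1)^n is given by a polynomial in n of degree at most j; that is, there exists a polynomial P_j \in \mathbb{Q}[t] with \deg P_j \leq j such that q^{(1,n)}_{-n+j} = P_j(n) for all n \in \mathbb{Z}. -/
namespace Stmt10Aux

open scoped Polynomial

/-! ### Discrete antiderivative of polynomials -/

section PolyPart
open Polynomial

lemma wb_le_of_lt_succ {d : WithBot ℕ} {n : ℕ} (h : d < ((n+1:ℕ) : WithBot ℕ)) :
    d ≤ (n : WithBot ℕ) := by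
  cases d with
  | bot => exact bot_le
  | coe m =>
    rw [Nat.cast_withBot] at h ⊢
    have h' : m < n + 1 := by exact_mod_cast h
    exact_mod_cast Nat.lt_succ_iff.mp h'

lemma antideriv : ∀ n : ℕ, ∀ Q : ℚ[X], Q.degree < n →
    ∃ R : ℚ[X], R.degree < n + 1 ∧ R.comp (X + 1) - R = Q := by
  intro n
  induction n with
  | zero =>
    intro Q hQ
    refine ⟨0, ?_, ?_⟩
    · simpa using (bot_lt_iff_ne_bot.mpr (by simp : ((0:ℕ)+1 : WithBot ℕ) ≠ ⊥))
    · have : Q = 0 := Polynomial.degree_eq_bot.mp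
        (Nat.WithBot.lt_zero_iff.mp (by exact_mod_cast hQ))
      simp [this]
  | succ n ih =>
    intro Q hQ
    by_cases hlt : Q.degree < n
    · obtain ⟨R, hR, hcomp⟩ := ih Q hlt
      refine ⟨R, lt_of_lt_of_le hR ?_, hcomp⟩
      have : ((n:WithBot ℕ)) ≤ ((n+1:ℕ):WithBot ℕ) := by exact_mod_cast Nat.le_succ n
      exact add_le_add_left this 1
    · -- degree Q = n
      have hdeg : Q.degree = n := le_antisymm (wb_le_of_lt_succ hQ) (not_lt.mp hlt)
      have hQ0 : Q ≠ 0 := fun h => by simp [h] at hdeg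
      set a := Q.leadingCoeff with ha
      have ha0 : a ≠ 0 := leadingCoeff_ne_zero.mpr hQ0
      have hc0 : a / (n+1 : ℚ) ≠ 0 := div_ne_zero ha0 (by positivity)
      set S : ℚ[X] := C (a / (n+1)) * X^(n+1) with hS
      set D : ℚ[X] := (X+1)^(n+1) - X^(n+1) with hD
      have hcompS : S.comp (X+1) - S = C (a / (n+1)) * D := by
        simp [hS, hD, mul_sub]
      have hmonic1 : ((X:ℚ[X])+1)^(n+1) |>.Monic := by
        simpa using (monic_X_add_C (1:ℚ)).pow (n+1)
      have hdX1 : ((X:ℚ[X])+1).degree = 1 := by simpa using degree_X_add_C (1:ℚ)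
      have hdeg1 : (((X:ℚ[X])+1)^(n+1)).degree = ((n+1:ℕ) : WithBot ℕ) := by
        rw [degree_pow, hdX1]; simp [nsmul_eq_mul]
      have hdeg2 : ((X:ℚ[X])^(n+1)).degree = ((n+1:ℕ) : WithBot ℕ) := degree_X_pow _
      have hDlt : D.degree < ((n+1:ℕ) : WithBot ℕ) := by
        rw [hD, ← hdeg1]
        exact degree_sub_lt (by rw [hdeg1, hdeg2]) (hmonic1.ne_zero)
          (by rw [hmonic1.leadingCoeff, (monic_X_pow _).leadingCoeff])
      have hDcoeff : D.coeff n = (n+1 : ℚ) := by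
        rw [hD, coeff_sub, coeff_X_add_one_pow, coeff_X_pow, if_neg (by omega)]
        simp
      have hDdeg : D.degree = (n : WithBot ℕ) := by
        apply le_antisymm (wb_le_of_lt_succ hDlt)
        apply le_degree_of_ne_zero
        rw [hDcoeff]; positivity
      have hDnd : D.natDegree = n := natDegree_eq_of_degree_eq_some hDdeg
      have hDlc : D.leadingCoeff = (n+1 : ℚ) := by
        rw [leadingCoeff, hDnd, hDcoeff]
      set T : ℚ[X] := C (a / (n+1)) * D with hT
      have hTdeg : T.degree = (n : WithBot ℕ) := by
        rw [hT, degree_C_mul hc0, hDdeg]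
      have hTlc : T.leadingCoeff = a := by
        rw [hT, leadingCoeff_mul, leadingCoeff_C, hDlc]
        field_simp
      have hsub : (Q - T).degree < (n : WithBot ℕ) := by
        rw [← hdeg]
        exact degree_sub_lt (hdeg.trans hTdeg.symm) hQ0 (by rw [hTlc])
      obtain ⟨R', hR', hcomp'⟩ := ih (Q - T) hsub
      refine ⟨S + R', ?_, ?_⟩
      · apply lt_of_le_of_lt (degree_add_le _ _)
        rw [max_lt_iff]
        constructor
        · rw [hS, degree_C_mul hc0, degree_X_pow]
          have : ((n+1:ℕ) : WithBot ℕ) < ((n+2:ℕ) : WithBot ℕ) := by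
            exact_mod_cast Nat.lt_succ_self (n+1)
          exact_mod_cast Nat.lt_succ_self (n+1)
        · refine lt_of_lt_of_le hR' ?_
          have : ((n:WithBot ℕ)) ≤ ((n+1:ℕ):WithBot ℕ) := by exact_mod_cast Nat.le_succ n
          exact add_le_add_left this 1
      · rw [add_comp]
        have : S.comp (X+1) + R'.comp (X+1) - (S + R') =
            (S.comp (X+1) - S) + (R'.comp (X+1) - R') := by ring
        rw [this, hcompS, hcomp']
        ring

lemma wb_le_of_lt_succ' {d : WithBot ℕ} {n : ℕ} (h : d < (n : WithBot ℕ) + 1) :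
    d ≤ (n : WithBot ℕ) := by
  apply wb_le_of_lt_succ
  refine lt_of_lt_of_le h ?_
  push_cast
  rfl

lemma poly_of_diff (g : ℤ → ℚ) (j : ℕ) (Q : ℚ[X]) (hQ : Q.degree < (j : WithBot ℕ))
    (h : ∀ n : ℤ, g (n+1) - g n = Q.eval (n:ℚ)) :
    ∃ P : ℚ[X], P.degree ≤ (j : WithBot ℕ) ∧ ∀ n : ℤ, g n = P.eval (n:ℚ) := by
  obtain ⟨R, hR, hcomp⟩ := antideriv j Q hQ
  have hkey : ∀ x : ℚ, R.eval (x+1) - R.eval x = Q.eval x := by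
    intro x
    have := congrArg (Polynomial.eval x) hcomp
    simpa [eval_comp] using this
  refine ⟨R + C (g 0 - R.eval 0), ?_, ?_⟩
  · apply le_trans (degree_add_le _ _)
    rw [max_le_iff]
    exact ⟨wb_le_of_lt_succ' hR, le_trans (degree_C_le) (by simp)⟩
  · intro n
    induction n using Int.induction_on with
    | zero => simp
    | succ k ih =>
      have h1 := h k
      push_cast at h1 ih ⊢
      have h2 := hkey (k : ℚ)
      simp only [eval_add, eval_C] at ih ⊢
      linarith
    | pred k ih =>
      have h1 := h (-(k:ℤ) - 1)
      push_cast at h1 ih ⊢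
      have h2 := hkey (-(k:ℚ) - 1)
      simp only [eval_add, eval_C] at ih ⊢
      have e : (-(k:ℚ) - 1) + 1 = -(k:ℚ) := by ring
      have e1 : (-(k:ℤ) - 1) + 1 = -(k:ℤ) := by ring
      rw [e1] at h1
      rw [e] at h2
      linarith

end PolyPart

section SeriesPart
open PowerSeries HahnSeries

/-! ### The unit power series `u = (e^x - 1)/x` -/

noncomputable def u : PowerSeries ℚ := PowerSeries.mk fun k => 1 / (k+1).factorial

lemma constantCoeff_u : PowerSeries.constantCoeff u = 1 := by
  simp [u, ← coeff_zero_eq_constantCoeff]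

lemma exp_sub_one : PowerSeries.exp ℚ - 1 = PowerSeries.X * u := by
  ext k
  cases k with
  | zero => simp [coeff_exp, u]
  | succ k =>
    rw [map_sub, coeff_exp, coeff_succ_X_mul]
    simp [u, Nat.factorial_succ]

lemma isUnit_u : IsUnit u := by
  rw [PowerSeries.isUnit_iff_constantCoeff, constantCoeff_u]; exact isUnit_one

noncomputable def Uu : (PowerSeries ℚ)ˣ := isUnit_u.unit

noncomputable def W : (LaurentSeries ℚ)ˣ :=
  ⟨HahnSeries.single 1 1, HahnSeries.single (-1) 1,
   by rw [single_mul_single]; norm_num [single_zero_one],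
   by rw [single_mul_single]; norm_num [single_zero_one]⟩

lemma W_zpow (m : ℤ) : ((W ^ m : (LaurentSeries ℚ)ˣ) : LaurentSeries ℚ)
    = HahnSeries.single m 1 := by
  induction m using Int.induction_on with
  | zero => simp [single_zero_one]
  | succ k ih =>
    rw [zpow_add_one, Units.val_mul, ih]
    show single (k:ℤ) (1:ℚ) * single 1 1 = _
    rw [single_mul_single, mul_one]
  | pred k ih =>
    rw [zpow_sub_one, Units.val_mul, ih]
    show single (-k:ℤ) (1:ℚ) * (W⁻¹ : (LaurentSeries ℚ)ˣ).val = _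
    show single (-k:ℤ) (1:ℚ) * single (-1) 1 = _
    rw [single_mul_single, mul_one]
    congr 1

noncomputable def φ : PowerSeries ℚ →+* LaurentSeries ℚ := HahnSeries.ofPowerSeries ℤ ℚ

noncomputable def VU : (LaurentSeries ℚ)ˣ := Units.map φ.toMonoidHom Uu

lemma VU_zpow (m : ℤ) : ((VU ^ m : (LaurentSeries ℚ)ˣ) : LaurentSeries ℚ)
    = φ ((Uu ^ m : (PowerSeries ℚ)ˣ) : PowerSeries ℚ) := by
  rw [VU, ← map_zpow, Units.coe_map]
  rfl

lemma E_sub_one : E - 1 = ((W * VU : (LaurentSeries ℚ)ˣ) : LaurentSeries ℚ) := by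
  have : E - 1 = φ (PowerSeries.exp ℚ - 1) := by
    rw [map_sub, map_one]; rfl
  rw [this, exp_sub_one, map_mul, Units.val_mul]
  congr 1
  exact HahnSeries.ofPowerSeries_X

noncomputable def f (j : ℕ) (n : ℤ) : ℚ :=
  PowerSeries.coeff j (PowerSeries.exp ℚ * ((Uu ^ (-n) : (PowerSeries ℚ)ˣ) : PowerSeries ℚ))

lemma q_eq_f (n : ℤ) (j : ℕ) : q n (-n + j) = f j n := by
  have h1 : ((E - 1) ^ n)⁻¹ = HahnSeries.single (-n) 1 *
      φ ((Uu ^ (-n) : (PowerSeries ℚ)ˣ) : PowerSeries ℚ) := by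
    rw [E_sub_one, ← Units.val_zpow_eq_zpow_val, ← Units.val_inv_eq_inv_val, ← zpow_neg,
      mul_zpow, Units.val_mul, W_zpow, VU_zpow]
  rw [q, h1]
  have h2 : E * (HahnSeries.single (-n) 1 *
      φ ((Uu ^ (-n) : (PowerSeries ℚ)ˣ) : PowerSeries ℚ)) =
      HahnSeries.single (-n) 1 *
      φ (PowerSeries.exp ℚ * ((Uu ^ (-n) : (PowerSeries ℚ)ˣ) : PowerSeries ℚ)) := by
    rw [map_mul]
    have hE : φ (PowerSeries.exp ℚ) = E := rfl
    rw [hE]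
    ring
  rw [h2, add_comm, coeff_single_mul_add, one_mul]
  exact HahnSeries.ofPowerSeries_apply_coeff _ _

/-! ### The recurrence and polynomiality -/

noncomputable def v : PowerSeries ℚ := ((Uu⁻¹ : (PowerSeries ℚ)ˣ) : PowerSeries ℚ) - 1

lemma constantCoeff_v : PowerSeries.constantCoeff v = 0 := by
  have h : (PowerSeries.constantCoeff)
      ((Uu : PowerSeries ℚ) * ((Uu⁻¹ : (PowerSeries ℚ)ˣ) : PowerSeries ℚ)) = 1 := by
    rw [← Units.val_mul, mul_inv_cancel, Units.val_one, map_one]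
  rw [map_mul] at h
  have hu : (Uu : PowerSeries ℚ) = u := IsUnit.unit_spec _
  rw [hu, constantCoeff_u, one_mul] at h
  rw [v, map_sub, h, map_one, sub_self]

lemma f_diff (j : ℕ) (n : ℤ) :
    f j (n+1) - f j n = ∑ k ∈ Finset.range j,
      (PowerSeries.coeff (j - k) v) * f k n := by
  have hz : (Uu ^ (-(n+1)) : (PowerSeries ℚ)ˣ) = Uu ^ (-n) * Uu⁻¹ := by
    rw [← zpow_neg_one, ← zpow_add]
    congr 1
    ring
  set A : PowerSeries ℚ :=
    PowerSeries.exp ℚ * ((Uu ^ (-n) : (PowerSeries ℚ)ˣ) : PowerSeries ℚ) with hA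
  have h1 : f j (n+1) - f j n = PowerSeries.coeff j (A * v) := by
    rw [f, f, hz, Units.val_mul, ← mul_assoc, ← hA, v, mul_sub, mul_one, map_sub]
  rw [h1, PowerSeries.coeff_mul, Finset.Nat.sum_antidiagonal_eq_sum_range_succ_mk,
    Finset.sum_range_succ]
  have hlast : PowerSeries.coeff j A * PowerSeries.coeff (j - j) v = 0 := by
    simp [PowerSeries.coeff_zero_eq_constantCoeff, constantCoeff_v]
  rw [hlast, add_zero]
  apply Finset.sum_congr rfl
  intro k hk
  rw [mul_comm]
  rfl

lemma f_poly : ∀ j : ℕ, ∃ P : Polynomial ℚ, P.degree ≤ (j : WithBot ℕ) ∧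
    ∀ n : ℤ, f j n = P.eval (n : ℚ) := by
  intro j
  induction j using Nat.strong_induction_on with
  | _ j ih =>
    have key : ∀ i : ℕ, ∃ P : Polynomial ℚ,
        (i < j → P.degree ≤ (i : WithBot ℕ) ∧ ∀ n : ℤ, f i n = P.eval (n : ℚ)) := by
      intro i
      by_cases h : i < j
      · obtain ⟨P, h1, h2⟩ := ih i h
        exact ⟨P, fun _ => ⟨h1, h2⟩⟩
      · exact ⟨0, fun hc => absurd hc h⟩
    choose P hP using key
    set Q : ℚ[X] := ∑ k ∈ Finset.range j,
      Polynomial.C (PowerSeries.coeff (j - k) v) * P k with hQ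
    have hQdeg : Q.degree < (j : WithBot ℕ) := by
      apply lt_of_le_of_lt (Polynomial.degree_sum_le _ _)
      rw [Finset.sup_lt_iff (by rw [Nat.cast_withBot]; exact WithBot.bot_lt_coe j)]
      intro k hk
      have hk' : k < j := Finset.mem_range.mp hk
      calc (Polynomial.C (PowerSeries.coeff (j - k) v) * P k).degree
          ≤ (Polynomial.C (PowerSeries.coeff (j - k) v)).degree + (P k).degree :=
            Polynomial.degree_mul_le _ _
        _ ≤ 0 + (k : WithBot ℕ) := add_le_add Polynomial.degree_C_le ((hP k hk').1)
        _ = (k : WithBot ℕ) := zero_add _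
        _ < (j : WithBot ℕ) := by exact_mod_cast hk'
    have hdiff : ∀ n : ℤ, f j (n+1) - f j n = Q.eval (n : ℚ) := by
      intro n
      rw [f_diff, hQ, Polynomial.eval_finset_sum]
      apply Finset.sum_congr rfl
      intro k hk
      rw [Polynomial.eval_mul, Polynomial.eval_C, (hP k (Finset.mem_range.mp hk)).2 n]
    exact poly_of_diff (f j) j Q hQdeg hdiff

end SeriesPart

end Stmt10Aux

/-- For each fixed `j ≥ 0` there is a polynomial `P_j ∈ ℚ[t]` of degree at most `j` such
that `q^{(1,n)}_{-n+j} = P_j(n)` for all integers `n`. -/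
theorem stmt10 (j : ℕ) :
    ∃ P : Polynomial ℚ, P.degree ≤ j ∧ ∀ n : ℤ, q n (-n + j) = P.eval (n : ℚ) := by
  obtain ⟨P, h1, h2⟩ := Stmt10Aux.f_poly j
  exact ⟨P, h1, fun n => (Stmt10Aux.q_eq_f n j).trans (h2 n)⟩
end

section
/- For each j > 0, the polynomial P_j(n) giving the coefficient of x^{-n+j} in e^x/(e^x-1)^n is divisible by (n - j - 1); i.e., P_j(j+1) = 0. -/
open PowerSeries

lemma myDerivExp : derivative ℚ (exp ℚ) = exp ℚ := by
  ext n
  rw [coeff_derivative, coeff_exp, coeff_exp]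
  simp only [eq_ratCast, Rat.cast_eq_id, id_eq]
  rw [Nat.factorial_succ]
  push_cast
  have h1 : ((n:ℚ)+1) ≠ 0 := by positivity
  have h2 : ((n.factorial:ℚ)) ≠ 0 := by positivity
  field_simp

lemma key (j : ℕ) (hj : 0 < j) (v : PowerSeries ℚ)
    (hv : PowerSeries.exp ℚ - 1 = PowerSeries.X * v) :
    PowerSeries.coeff j (PowerSeries.exp ℚ * (v⁻¹) ^ (j+1)) = 0 := by
  have hv0 : constantCoeff v = 1 := by
    have := congrArg (coeff 1) hv
    rw [map_sub, coeff_exp, coeff_one, coeff_succ_X_mul, coeff_zero_eq_constantCoeff] at this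
    simpa using this.symm
  have hvne : constantCoeff v ≠ 0 := by rw [hv0]; exact one_ne_zero
  have hvv : v * v⁻¹ = 1 := PowerSeries.mul_inv_cancel v hvne
  set u := v⁻¹ with hu
  set D := derivative ℚ with hD
  -- exp = X * Dv + v
  have hexp : exp ℚ = X * D v + v := by
    have := congrArg D hv
    rw [map_sub, Derivation.map_one_eq_zero, sub_zero, myDerivExp, Derivation.leibniz] at this
    rw [this, derivative_X]
    simp [smul_eq_mul, mul_comm]
  have hdu : D u = -u ^ 2 * D v := derivative_inv' v
  have hφ : D (u ^ j) = -(j : ℚ⟦X⟧) * u ^ (j+1) * D v := by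
    rw [Derivation.leibniz_pow, hdu]
    have hpow : u ^ (j-1) * u ^ 2 = u ^ (j+1) := by
      rw [← pow_add]; congr 1; omega
    rw [smul_eq_mul, nsmul_eq_mul]
    calc (j : ℚ⟦X⟧) * (u ^ (j-1) * (-u^2 * D v))
        = -(j : ℚ⟦X⟧) * (u ^ (j-1) * u ^ 2) * D v := by ring
      _ = -(j : ℚ⟦X⟧) * u ^ (j+1) * D v := by rw [hpow]
  have hψ : (j : ℚ⟦X⟧) * (exp ℚ * u ^ (j+1))
      = (j : ℚ⟦X⟧) * u ^ j - X * D (u ^ j) := by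
    rw [hexp, hφ]
    linear_combination (j : ℚ⟦X⟧) * u ^ j * hvv
  have hc := congrArg (coeff j) hψ
  have hnat : (j : ℚ⟦X⟧) = C (j : ℚ) := by simp
  rw [hnat, map_sub, coeff_C_mul, coeff_C_mul] at hc
  obtain ⟨i, rfl⟩ : ∃ i, j = i + 1 := ⟨j - 1, by omega⟩
  rw [coeff_succ_X_mul, coeff_derivative] at hc
  have hjne : ((i:ℚ)+1) ≠ 0 := by positivity
  have : ((i:ℚ)+1) * coeff (i+1) (exp ℚ * u ^ (i+1+1)) = 0 := by
    push_cast at hc ⊢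
    linarith [hc]
  exact (mul_eq_zero.mp this).resolve_left hjne

/-- For `j > 0`, any polynomial `P_j` representing `n ↦ q^{(1,n)}_{-n+j}` on `ℤ` is
divisible by `n - j - 1`, i.e. `P_j(j+1) = 0`. -/
theorem stmt11 (j : ℕ) (hj : 0 < j) (P : Polynomial ℚ)
    (hP : ∀ n : ℤ, P.eval (n : ℚ) = q n (-n + j)) :
    P.eval ((j : ℚ) + 1) = 0 := by
  -- obtain v with exp - 1 = X * v
  obtain ⟨v, hv⟩ : (X : ℚ⟦X⟧) ∣ (exp ℚ - 1) := by
    rw [X_dvd_iff]; simp [constantCoeff_exp]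
  have hv' : exp ℚ - 1 = X * v := hv
  have hv0 : constantCoeff v = 1 := by
    have := congrArg (coeff 1) hv'
    rw [map_sub, coeff_exp, coeff_one, coeff_succ_X_mul, coeff_zero_eq_constantCoeff] at this
    simpa using this.symm
  have hvne : constantCoeff v ≠ 0 := by rw [hv0]; exact one_ne_zero
  have hvv : v * v⁻¹ = 1 := PowerSeries.mul_inv_cancel v hvne
  set oPS := HahnSeries.ofPowerSeries ℤ ℚ with hoPS
  have hE1 : E - 1 = HahnSeries.single (1:ℤ) 1 * oPS v := by
    rw [E]
    rw [← map_one oPS, ← map_sub, hv', map_mul, HahnSeries.ofPowerSeries_X]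
  have hsingle : ∀ a b : ℤ, (HahnSeries.single a (1:ℚ)) * HahnSeries.single b 1
      = HahnSeries.single (a+b) 1 := fun a b => by
    rw [HahnSeries.single_mul_single, one_mul]
  have hinv : ((E - 1) ^ (j+1))⁻¹
      = HahnSeries.single (-(j+1):ℤ) 1 * oPS ((v⁻¹) ^ (j+1)) := by
    symm
    apply eq_inv_of_mul_eq_one_left
    rw [hE1, mul_pow, HahnSeries.single_pow]
    calc HahnSeries.single (-(j+1):ℤ) 1 * oPS ((v⁻¹)^(j+1))
          * (HahnSeries.single ((j+1) • (1:ℤ)) (1^(j+1)) * oPS v ^ (j+1))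
        = (HahnSeries.single (-(j+1):ℤ) 1 * HahnSeries.single ((j+1) • (1:ℤ)) (1^(j+1)))
          * (oPS ((v⁻¹)^(j+1)) * oPS v ^ (j+1)) := by ring
      _ = 1 := by
          rw [one_pow, hsingle, ← map_pow, ← map_mul, ← mul_pow,
            mul_comm (v⁻¹) v, hvv, one_pow]
          have h1 : oPS (1 : ℚ⟦X⟧) = 1 := map_one oPS
          have h2 : (-(j+1:ℤ)) + (j+1) • (1:ℤ) = 0 := by
            rw [nsmul_eq_mul]; push_cast; ring
          rw [h1, h2, HahnSeries.single_zero_one, one_mul]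
  have hq : q ((j:ℤ)+1) (-1) = coeff j (exp ℚ * (v⁻¹) ^ (j+1)) := by
    rw [q]
    have hz : ((j:ℤ)+1) = ((j+1 : ℕ) : ℤ) := by push_cast; ring
    rw [hz, zpow_natCast, hinv]
    have : E * (HahnSeries.single (-(j+1):ℤ) 1 * oPS ((v⁻¹) ^ (j+1)))
        = HahnSeries.single (-(j+1):ℤ) 1 * oPS (exp ℚ * (v⁻¹) ^ (j+1)) := by
      rw [E, map_mul]; ring
    rw [this]
    have hco : (-1 : ℤ) = (j : ℤ) + (-(j+1)) := by ring
    rw [hco, HahnSeries.coeff_single_mul_add, one_mul, hoPS,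
      HahnSeries.ofPowerSeries_apply_coeff]
  have := hP ((j:ℤ)+1)
  have harg : (-((j:ℤ)+1) + j) = -1 := by ring
  rw [harg] at this
  rw [hq, key j hj v hv'] at this
  rw [← this]
  norm_num
end

section
/- Given a formal power series f(x) = x + \sum_{n \geq 2} a_n x^n over \mathbb{C}, there exists a unique sequence (b_j)_{j \geq 1} of complex numbers such that the infinite product \cdots \exp(b_3 x^4 d/dx) \exp(b_2 x^3 d/dx) \exp(b_1 x^2 d/dx) applied to x equals f(x). (The product is well-defined on \mathbb{C}[[x]] since exp(b_j x^{j+1} d/dx) raises degrees by multiples of j, so each coefficient of the result depends on only finitely many factors.) -/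
open PowerSeries

/-- The derivation `x^{j+1} d/dx` on `ℂ[[x]]`. -/
noncomputable def D (j : ℕ) (g : PowerSeries ℂ) : PowerSeries ℂ :=
  PowerSeries.X ^ (j + 1) * PowerSeries.derivativeFun g

/-- The operator `exp(b x^{j+1} d/dx)` on `ℂ[[x]]` (for `j ≥ 1` the `k`-th term of the
exponential series raises degrees by at least `k`, so each coefficient of the result is
the finite sum below). -/
noncomputable def expD (j : ℕ) (b : ℂ) (g : PowerSeries ℂ) : PowerSeries ℂ :=
  PowerSeries.mk fun n =>
    ∑ k ∈ Finset.range (n + 1), (b ^ k / (Nat.factorial k : ℂ)) * PowerSeries.coeff n ((D j)^[k] g)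

/-- The partial product `exp(b_N x^{N+1} d/dx) ⋯ exp(b_2 x^3 d/dx) exp(b_1 x^2 d/dx) ⋅ x`. -/
noncomputable def partialProd (b : ℕ → ℂ) : ℕ → PowerSeries ℂ
  | 0 => PowerSeries.X
  | N + 1 => expD (N + 1) (b (N + 1)) (partialProd b N)

/-- The infinite product `⋯ exp(b_2 x^3 d/dx) exp(b_1 x^2 d/dx) ⋅ x`: the coefficient of
`x^n` stabilizes from stage `n` on, so the limit is given coefficientwise. -/
noncomputable def limitProd (b : ℕ → ℂ) : PowerSeries ℂ :=
  PowerSeries.mk fun n => PowerSeries.coeff n (partialProd b n)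

/-- The partial product `exp(-b_1 x^2 d/dx) exp(-b_2 x^3 d/dx) ⋯ exp(-b_N x^{N+1} d/dx) ⋅ x`
(the factor with the largest index is applied to `x` first). -/
noncomputable def revPartialProd (b : ℕ → ℂ) (N : ℕ) : PowerSeries ℂ :=
  (List.range N).foldr (fun k g => expD (k + 1) (-(b (k + 1))) g) PowerSeries.X

/-- The infinite product `exp(-b_1 x^2 d/dx) exp(-b_2 x^3 d/dx) ⋯ ⋅ x`, defined
coefficientwise since the coefficient of `x^n` stabilizes. -/
noncomputable def limitRevProd (b : ℕ → ℂ) : PowerSeries ℂ :=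
  PowerSeries.mk fun n => PowerSeries.coeff n (revPartialProd b n)

/-- Composition `f(g)` of formal power series, valid when `g` has zero constant term
(then `g^k` has order at least `k`, so each coefficient is the finite sum below). -/
noncomputable def comp (f g : PowerSeries ℂ) : PowerSeries ℂ :=
  PowerSeries.mk fun n =>
    ∑ k ∈ Finset.range (n + 1), PowerSeries.coeff k f * PowerSeries.coeff n (g ^ k)

lemma coeff_D (j m : ℕ) (g : PowerSeries ℂ) :
    PowerSeries.coeff m (D j g) =
      if j + 1 ≤ m then ((m - j : ℕ) : ℂ) * PowerSeries.coeff (m - j) g else 0 := by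
  rw [D, coeff_X_pow_mul', show g.derivativeFun = PowerSeries.derivative ℂ g from rfl, coeff_derivative]
  split_ifs with h
  · have h1 : m - (j + 1) + 1 = m - j := by omega
    rw [← h1]
    push_cast
    ring
  · rfl


lemma coeff_iterD_zero (j : ℕ) :
    ∀ k, 1 ≤ k → ∀ (g : PowerSeries ℂ) (m : ℕ), m ≤ k * j →
      PowerSeries.coeff m ((D j)^[k] g) = 0 := by
  intro k hk
  induction k, hk using Nat.le_induction with
  | base =>
    intro g m hm
    rw [one_mul] at hm
    rw [Function.iterate_one, coeff_D, if_neg (by omega)]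
  | succ k hk ih =>
    intro g m hm
    rw [Function.iterate_succ_apply', coeff_D]
    split_ifs with h
    · have hm' : m - j ≤ k * j := by
        rw [Nat.succ_mul] at hm
        omega
      rw [ih g (m - j) hm', mul_zero]
    · rfl

lemma coeff_expD_of_le (j : ℕ) (b : ℂ) (g : PowerSeries ℂ) (m : ℕ) (hm : m ≤ j) :
    PowerSeries.coeff m (expD j b g) = PowerSeries.coeff m g := by
  rw [expD, PowerSeries.coeff_mk]
  rw [Finset.sum_eq_single 0]
  · simp
  · intro k hk hk0
    rw [coeff_iterD_zero j k (Nat.one_le_iff_ne_zero.2 hk0) g m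
      (hm.trans (Nat.le_mul_of_pos_left j (Nat.pos_of_ne_zero hk0))), mul_zero]
  · intro h
    exact absurd (Finset.mem_range.2 (Nat.succ_pos m)) h

lemma coeff_expD_succ (j : ℕ) (hj : 1 ≤ j) (c : ℂ) (g : PowerSeries ℂ) :
    PowerSeries.coeff (j + 1) (expD j c g) =
      PowerSeries.coeff (j + 1) g + c * PowerSeries.coeff 1 g := by
  rw [expD, PowerSeries.coeff_mk]
  rw [Finset.sum_range_succ', Finset.sum_range_succ']
  have hzero : ∀ k ∈ Finset.range j,
      (c ^ (k + 1 + 1) / (Nat.factorial (k + 1 + 1) : ℂ)) *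
        PowerSeries.coeff (j + 1) ((D j)^[k + 1 + 1] g) = 0 := by
    intro k _
    have h1 : j + 1 ≤ (k + 1 + 1) * j := by
      calc j + 1 ≤ 2 * j := by omega
      _ ≤ (k + 1 + 1) * j := Nat.mul_le_mul_right j (by omega)
    rw [coeff_iterD_zero j (k + 1 + 1) (by omega) g (j + 1) h1, mul_zero]
  rw [Finset.sum_eq_zero hzero]
  have hD : PowerSeries.coeff (j + 1) ((D j)^[1] g) = PowerSeries.coeff 1 g := by
    rw [Function.iterate_one, coeff_D, if_pos (le_refl _)]
    have h2 : j + 1 - j = 1 := by omega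
    rw [h2]
    simp
  rw [hD]
  simp
  ring

lemma coeff_zero_partialProd (b : ℕ → ℂ) (N : ℕ) :
    PowerSeries.coeff 0 (partialProd b N) = 0 := by
  induction N with
  | zero => simp [partialProd]
  | succ N ih =>
    rw [partialProd, coeff_expD_of_le _ _ _ _ (by omega), ih]

lemma coeff_one_partialProd (b : ℕ → ℂ) (N : ℕ) :
    PowerSeries.coeff 1 (partialProd b N) = 1 := by
  induction N with
  | zero => simp [partialProd]
  | succ N ih =>
    rw [partialProd, coeff_expD_of_le _ _ _ _ (by omega), ih]

lemma coeff_partialProd_succ (b : ℕ → ℂ) (N : ℕ) :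
    PowerSeries.coeff (N + 2) (partialProd b (N + 1)) =
      PowerSeries.coeff (N + 2) (partialProd b N) + b (N + 1) := by
  have := coeff_expD_succ (N + 1) (by omega) (b (N + 1)) (partialProd b N)
  rw [partialProd]
  rw [show N + 1 + 1 = N + 2 from rfl] at this
  rw [this, coeff_one_partialProd, mul_one]

lemma coeff_limitProd_succ (b : ℕ → ℂ) (N : ℕ) :
    PowerSeries.coeff (N + 2) (limitProd b) =
      PowerSeries.coeff (N + 2) (partialProd b N) + b (N + 1) := by
  rw [limitProd, PowerSeries.coeff_mk]
  rw [show partialProd b (N + 2) = expD (N + 2) (b (N + 2)) (partialProd b (N + 1)) from rfl]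
  rw [coeff_expD_of_le _ _ _ _ (le_refl _), coeff_partialProd_succ]

lemma partialProd_congr (b c : ℕ → ℂ) (N : ℕ) (h : ∀ k, k ≤ N → b k = c k) :
    partialProd b N = partialProd c N := by
  induction N with
  | zero => rfl
  | succ N ih =>
    rw [partialProd, partialProd, h (N + 1) (le_refl _),
      ih (fun k hk => h k (by omega))]

noncomputable def bup (f : PowerSeries ℂ) : ℕ → ℕ → ℂ
  | 0 => fun _ => 0
  | N + 1 => fun k =>
      if k = N + 1 then
        PowerSeries.coeff (N + 2) f -
          PowerSeries.coeff (N + 2) (partialProd (bup f N) N)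
      else bup f N k

lemma bup_stable (f : PowerSeries ℂ) (k N : ℕ) (hk : k ≤ N) :
    ∀ M, N ≤ M → bup f M k = bup f N k := by
  intro M hM
  induction M, hM using Nat.le_induction with
  | base => rfl
  | succ M hM ih =>
    rw [show bup f (M + 1) k = if k = M + 1 then _ else bup f M k from rfl,
      if_neg (by omega), ih]

noncomputable def bgood (f : PowerSeries ℂ) : ℕ → ℂ := fun n => bup f n n

lemma bgood_eq_bup (f : PowerSeries ℂ) (N k : ℕ) (hk : k ≤ N) :
    bgood f k = bup f N k := by
  rw [bgood, bup_stable f k k (le_refl _) N hk]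

lemma partialProd_bgood (f : PowerSeries ℂ) (N : ℕ) :
    partialProd (bgood f) N = partialProd (bup f N) N :=
  partialProd_congr _ _ N (fun k hk => bgood_eq_bup f N k hk)

lemma limitProd_bgood (f : PowerSeries ℂ) (h0 : PowerSeries.coeff 0 f = 0)
    (h1 : PowerSeries.coeff 1 f = 1) : limitProd (bgood f) = f := by
  ext n
  match n with
  | 0 => rw [limitProd, PowerSeries.coeff_mk, coeff_zero_partialProd, h0]
  | 1 => rw [limitProd, PowerSeries.coeff_mk, coeff_one_partialProd, h1]
  | (N + 2) =>
    rw [coeff_limitProd_succ]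
    have hb : bgood f (N + 1) = PowerSeries.coeff (N + 2) f -
        PowerSeries.coeff (N + 2) (partialProd (bup f N) N) := by
      rw [bgood, show bup f (N + 1) (N + 1) = if N + 1 = N + 1 then _ else bup f N (N+1) from rfl,
        if_pos rfl]
    rw [hb, ← partialProd_bgood]
    ring


/-- Given `f(x) = x + ∑_{n≥2} a_n x^n` in `ℂ[[x]]`, there is a unique sequence
`(b_j)_{j≥1}` (encoded as `b : ℕ → ℂ` with the unused value `b 0` normalized to `0`)
such that `⋯ exp(b_3 x^4 d/dx) exp(b_2 x^3 d/dx) exp(b_1 x^2 d/dx) ⋅ x = f(x)`. -/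
theorem stmt12 (f : PowerSeries ℂ) (h0 : PowerSeries.coeff 0 f = 0)
    (h1 : PowerSeries.coeff 1 f = 1) :
    ∃! b : ℕ → ℂ, b 0 = 0 ∧ limitProd b = f := by
  refine ⟨bgood f, ⟨rfl, limitProd_bgood f h0 h1⟩, ?_⟩
  rintro c ⟨hc0, hcf⟩
  have key : ∀ n, c n = bgood f n := by
    intro n
    induction n using Nat.strong_induction_on with
    | _ n ih =>
      match n with
      | 0 => rw [hc0]; rfl
      | (N + 1) =>
        have hpp : partialProd c N = partialProd (bgood f) N :=
          partialProd_congr _ _ N (fun k hk => ih k (by omega))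
        have e1 := coeff_limitProd_succ c N
        have e2 := coeff_limitProd_succ (bgood f) N
        rw [hcf] at e1
        rw [limitProd_bgood f h0 h1] at e2
        rw [hpp] at e1
        have := e1.symm.trans e2
        exact add_left_cancel this
  exact funext key
end

section
/- In \mathbb{C}[[x]], exp(b x^2 d/dx) \cdot x = x/(1 - b x) for any b \in \mathbb{C}. -/
open PowerSeries

lemma derivFun_X_pow (n : ℕ) :
    PowerSeries.derivativeFun ((PowerSeries.X : PowerSeries ℂ) ^ (n + 1))
      = ((n + 1 : ℕ) : ℂ) • PowerSeries.X ^ n := by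
  rw [← Polynomial.coe_X (R := ℂ), ← Polynomial.coe_pow,
    show ∀ f : Polynomial ℂ, derivativeFun (f : PowerSeries ℂ) = d⁄dX ℂ f from fun _ => rfl,
    derivative_coe,
    Polynomial.derivative_X_pow]
  push_cast
  simp [Polynomial.coe_pow, Polynomial.smul_eq_C_mul, smul_eq_C_mul]

lemma D_iter (k : ℕ) :
    (D 1)^[k] (PowerSeries.X : PowerSeries ℂ)
      = ((k.factorial : ℕ) : ℂ) • PowerSeries.X ^ (k + 1) := by
  induction k with
  | zero => simp
  | succ k ih =>
    rw [Function.iterate_succ_apply', ih]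
    unfold D
    rw [derivativeFun_smul, derivFun_X_pow]
    rw [smul_smul, mul_smul_comm, ← pow_add, show 1 + 1 + k = k + 1 + 1 from by ring,
      Nat.factorial_succ]
    push_cast
    rw [mul_comm ((k : ℂ) + 1)]

lemma coeff_expD (b : ℂ) (n : ℕ) :
    PowerSeries.coeff n (expD 1 b PowerSeries.X)
      = if n = 0 then 0 else b ^ (n - 1) := by
  simp only [expD, coeff_mk, D_iter, map_smul, coeff_X_pow, smul_eq_mul]
  cases n with
  | zero => simp
  | succ m =>
    rw [Finset.sum_eq_single m]
    · have : (m.factorial : ℂ) ≠ 0 := Nat.cast_ne_zero.mpr m.factorial_ne_zero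
      simp only [if_pos rfl, mul_one, Nat.succ_ne_zero, if_false, Nat.add_sub_cancel]
      field_simp
      simp
    · intro k _ hk
      simp [Nat.succ_ne_succ.mpr (Ne.symm hk), (by omega : m + 1 ≠ k + 1), hk.symm]
    · intro h
      exact absurd (Finset.mem_range.mpr (by omega)) h

lemma geom_inv (b : ℂ) :
    (PowerSeries.mk fun n => b ^ n) = (1 - PowerSeries.C b * PowerSeries.X)⁻¹ := by
  have hc : constantCoeff (1 - PowerSeries.C b * PowerSeries.X) ≠ 0 := by simp
  rw [eq_comm, PowerSeries.inv_eq_iff_mul_eq_one hc]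
  ext n
  rw [mul_sub, mul_one, map_sub]
  have : (PowerSeries.mk fun n => (b : ℂ) ^ n) * (PowerSeries.C b * PowerSeries.X)
      = PowerSeries.C b * ((PowerSeries.mk fun n => (b : ℂ) ^ n) * PowerSeries.X) := by
    ring
  rw [this, coeff_C_mul]
  cases n with
  | zero => simp
  | succ m => simp [coeff_succ_mul_X, pow_succ, mul_comm]

/-- `exp(b x^2 d/dx) ⋅ x = x/(1 - b x)` in `ℂ[[x]]`. -/
theorem stmt15 (b : ℂ) :
    expD 1 b PowerSeries.X
      = PowerSeries.X * (1 - PowerSeries.C b * PowerSeries.X)⁻¹ := by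
  rw [← geom_inv]
  ext n
  rw [coeff_expD]
  cases n with
  | zero => simp
  | succ m => simp [coeff_succ_X_mul]
end
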